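/- For an essentially bounded random variable L, EVaR_α(L) = inf_{t>0} t log(E[e^{L/t}]/(1-α)) converges to the essential supremum of L as α → 1⁻. -/

import Mathlib

open MeasureTheory Filter

/-- For essentially bounded `L`, `EVaR_α(L) → ess sup L` as `α → 1⁻`. -/
theorem evar_tendsto_esssup {Ω : Type*} [MeasurableSpace Ω]
    (μ : Measure Ω) [IsProbabilityMeasure μ]
    (L : Ω → ℝ) (hL : MemLp L ⊤ μ) :
    Tendsto (fun α : ℝ =>
        ⨅ t : Set.Ioi (0:ℝ),
          (t : ℝ) * Real.log ((∫ ω, Real.exp (L ω / t) ∂μ) / (1 - α)))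
      (nhdsWithin 1 (Set.Iio 1)) (nhds (essSup L μ)) := by
  set M := essSup L μ with hM
  set C := (eLpNormEssSup L μ).toReal with hCdef
  have hC : ∀ᵐ ω ∂μ, |L ω| ≤ C := by
    have h := ae_le_eLpNormEssSup (f := L) (μ := μ)
    have hfin : eLpNormEssSup L μ < ⊤ := by
      have := hL.eLpNorm_lt_top
      rwa [eLpNorm_exponent_top] at this
    filter_upwards [h] with ω hω
    rw [← Real.norm_eq_abs]
    have := ENNReal.toReal_mono hfin.ne hω
    simpa using this
  have hbdd : IsBoundedUnder (· ≤ ·) (ae μ) L :=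
    ⟨C, hC.mono fun ω h => (abs_le.1 h).2⟩
  have hbdd' : IsBoundedUnder (· ≥ ·) (ae μ) L :=
    ⟨-C, hC.mono fun ω h => (abs_le.1 h).1⟩
  have hLleM : ∀ᵐ ω ∂μ, L ω ≤ M := ae_le_essSup hbdd
  -- integrability
  have hInt : ∀ t : ℝ, 0 < t → Integrable (fun ω => Real.exp (L ω / t)) μ := by
    intro t ht
    have hmeas : AEStronglyMeasurable (fun ω => Real.exp (L ω / t)) μ :=
      (Real.continuous_exp.comp (continuous_id.div_const t)).comp_aestronglyMeasurable hL.1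
    refine (integrable_const (Real.exp (C / t))).mono' hmeas ?_
    filter_upwards [hC] with ω hω
    rw [Real.norm_eq_abs, abs_of_pos (Real.exp_pos _)]
    exact Real.exp_le_exp.2 (div_le_div_of_nonneg_right (abs_le.1 hω).2 ht.le)
  -- positivity of the integral
  have hIpos : ∀ t : ℝ, 0 < t → 0 < ∫ ω, Real.exp (L ω / t) ∂μ := by
    intro t ht
    have hle : Real.exp (-C / t) ≤ ∫ ω, Real.exp (L ω / t) ∂μ := by
      calc Real.exp (-C / t) = ∫ _ω, Real.exp (-C / t) ∂μ := by simp
        _ ≤ ∫ ω, Real.exp (L ω / t) ∂μ := by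
            refine integral_mono_ae (integrable_const _) (hInt t ht) ?_
            filter_upwards [hC] with ω hω
            exact Real.exp_le_exp.2 (div_le_div_of_nonneg_right (abs_le.1 hω).1 ht.le)
    exact lt_of_lt_of_le (Real.exp_pos _) hle
  -- upper bound on the integral
  have hIle : ∀ t : ℝ, 0 < t → (∫ ω, Real.exp (L ω / t) ∂μ) ≤ Real.exp (M / t) := by
    intro t ht
    calc (∫ ω, Real.exp (L ω / t) ∂μ) ≤ ∫ _ω, Real.exp (M / t) ∂μ := by
          refine integral_mono_ae (hInt t ht) (integrable_const _) ?_
          filter_upwards [hLleM] with ω hω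
          exact Real.exp_le_exp.2 (div_le_div_of_nonneg_right hω ht.le)
      _ = Real.exp (M / t) := by simp
  rw [Metric.tendsto_nhds]
  intro ε hε
  set ε' := ε / 2 with hε'def
  have hε' : 0 < ε' := by positivity
  set q := (μ {ω | M - ε' ≤ L ω}).toReal with hqdef
  have hq : 0 < q := by
    have hne : μ {ω | M - ε' ≤ L ω} ≠ 0 := by
      intro h0
      have hae : ∀ᵐ ω ∂μ, L ω < M - ε' := by
        rw [ae_iff]
        simpa [not_lt] using h0
      have : M ≤ M - ε' := by
        rw [hM]
        refine limsup_le_of_le (hbdd'.isCoboundedUnder_flip) ?_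
        exact hae.mono fun ω h => h.le
      linarith
    exact ENNReal.toReal_pos hne (measure_ne_top μ _)
  have hq1 : q ≤ 1 := by
    rw [hqdef]
    exact ENNReal.toReal_le_of_le_ofReal zero_le_one (by simpa using prob_le_one)
  -- the window of α
  have hwin : Set.Ioo (1 - q) 1 ∈ nhdsWithin (1:ℝ) (Set.Iio 1) :=
    Ioo_mem_nhdsLT (by linarith)
  filter_upwards [hwin] with α hα
  obtain ⟨hα1, hα2⟩ := hα
  have h1α : 0 < 1 - α := by linarith
  have h1αq : 1 - α < q := by linarith
  -- lower bound for every t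
  have hlow : ∀ t : Set.Ioi (0:ℝ),
      M - ε' ≤ (t : ℝ) * Real.log ((∫ ω, Real.exp (L ω / t) ∂μ) / (1 - α)) := by
    rintro ⟨t, ht⟩
    simp only
    have ht : (0:ℝ) < t := ht
    have hMarkov : Real.exp ((M - ε') / t) *
        (μ {ω | Real.exp ((M - ε') / t) ≤ Real.exp (L ω / t)}).toReal
        ≤ ∫ ω, Real.exp (L ω / t) ∂μ :=
      mul_meas_ge_le_integral_of_nonneg
        (ae_of_all _ fun ω => (Real.exp_pos _).le) (hInt t ht) _
    have hsub : {ω | M - ε' ≤ L ω} ⊆ {ω | Real.exp ((M - ε') / t) ≤ Real.exp (L ω / t)} := by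
      intro ω hω
      exact Real.exp_le_exp.2 (div_le_div_of_nonneg_right hω ht.le)
    have hqle : q ≤ (μ {ω | Real.exp ((M - ε') / t) ≤ Real.exp (L ω / t)}).toReal := by
      rw [hqdef]
      exact ENNReal.toReal_mono (measure_ne_top μ _) (measure_mono hsub)
    have hI : Real.exp ((M - ε') / t) * q ≤ ∫ ω, Real.exp (L ω / t) ∂μ := by
      calc Real.exp ((M - ε') / t) * q
          ≤ Real.exp ((M - ε') / t) *
            (μ {ω | Real.exp ((M - ε') / t) ≤ Real.exp (L ω / t)}).toReal := by
            exact mul_le_mul_of_nonneg_left hqle (Real.exp_pos _).le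
        _ ≤ _ := hMarkov
    have hlog : (M - ε') / t ≤ Real.log ((∫ ω, Real.exp (L ω / t) ∂μ) / (1 - α)) := by
      have harg : Real.exp ((M - ε') / t) ≤ (∫ ω, Real.exp (L ω / t) ∂μ) / (1 - α) := by
        rw [le_div_iff₀ h1α]
        calc Real.exp ((M - ε') / t) * (1 - α)
            ≤ Real.exp ((M - ε') / t) * q :=
              mul_le_mul_of_nonneg_left h1αq.le (Real.exp_pos _).le
          _ ≤ _ := hI
      calc (M - ε') / t = Real.log (Real.exp ((M - ε') / t)) := (Real.log_exp _).symm
        _ ≤ _ := Real.log_le_log (Real.exp_pos _) harg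
    calc M - ε' = t * ((M - ε') / t) := by field_simp
      _ ≤ t * Real.log ((∫ ω, Real.exp (L ω / t) ∂μ) / (1 - α)) :=
          mul_le_mul_of_nonneg_left hlog ht.le
  have hbddBelow : BddBelow (Set.range fun t : Set.Ioi (0:ℝ) =>
      (t : ℝ) * Real.log ((∫ ω, Real.exp (L ω / t) ∂μ) / (1 - α))) := by
    refine ⟨M - ε', ?_⟩
    rintro x ⟨t, rfl⟩
    exact hlow t
  have hlowInf : M - ε' ≤ ⨅ t : Set.Ioi (0:ℝ),
      (t : ℝ) * Real.log ((∫ ω, Real.exp (L ω / t) ∂μ) / (1 - α)) :=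
    le_ciInf hlow
  -- upper bound
  have hupInf : (⨅ t : Set.Ioi (0:ℝ),
      (t : ℝ) * Real.log ((∫ ω, Real.exp (L ω / t) ∂μ) / (1 - α))) ≤ M := by
    have hα0 : 0 < α := by nlinarith
    set c := -Real.log (1 - α) with hcdef
    have hc : 0 ≤ c := by
      rw [hcdef, neg_nonneg]
      exact Real.log_nonpos h1α.le (by linarith)
    refine le_of_forall_pos_le_add ?_
    intro η hη
    set t : ℝ := η / (c + 1) with htdef
    have ht : 0 < t := by positivity
    have key : t * Real.log ((∫ ω, Real.exp (L ω / t) ∂μ) / (1 - α)) ≤ M + η := by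
      have hlogle : Real.log ((∫ ω, Real.exp (L ω / t) ∂μ) / (1 - α))
          ≤ M / t + c := by
        calc Real.log ((∫ ω, Real.exp (L ω / t) ∂μ) / (1 - α))
            ≤ Real.log (Real.exp (M / t) / (1 - α)) := by
              refine Real.log_le_log (div_pos (hIpos t ht) h1α) ?_
              exact div_le_div_of_nonneg_right (hIle t ht) h1α.le
          _ = M / t + c := by
              rw [Real.log_div (Real.exp_ne_zero _) (ne_of_gt h1α), Real.log_exp, hcdef]
              ring
      calc t * Real.log ((∫ ω, Real.exp (L ω / t) ∂μ) / (1 - α))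
          ≤ t * (M / t + c) := mul_le_mul_of_nonneg_left hlogle ht.le
        _ = M + t * c := by rw [mul_add, mul_div_cancel₀ _ (ne_of_gt ht)]
        _ ≤ M + η := by
            have : t * c ≤ η := by
              rw [htdef]
              rw [div_mul_eq_mul_div, div_le_iff₀ (by positivity)]
              nlinarith
            linarith
    exact le_trans (ciInf_le hbddBelow ⟨t, ht⟩) key
  rw [Real.dist_eq, abs_sub_lt_iff]
  constructor
  · linarith [hupInf]
  · linarith [hlowInf]
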